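/- Let k ≥ 3 and for 1 ≤ i ≤ k−1 set L_i = 1 + x_i + x_{i+1}. Define Q_k(x_1, x_2, x_4, ..., x_k) = −x_2(1+x_2)Π_{i=4}^{k−1}L_i + (x_2−x_4)L_1 Π_{i=4}^{k−1}L_i + x_4(1+x_4)L_1 Π_{i=5}^{k−1}L_i + Σ_{m=5}^{k−1} x_m(x_m+1)(x_{m−1}−x_{m+1}) L_1 Π_{i=4, i≠m−1,m}^{k−1} L_i. Then for all k ≥ 6, the polynomial identity Q_k = (Π_{i=4}^{k−2} L_i)·[x_1 x_2 L_{k−1} − x_{k−1} x_k L_1] holds. -/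

import Mathlib

open Finset

/-- the key polynomial identity
`Q_k = (∏_{i=4}^{k−2} L_i)·[x₁x₂L_{k−1} − x_{k−1}x_k L₁]` for `k ≥ 6`, where
`L_i = 1 + x_i + x_{i+1}`. -/
theorem lyness_Qk_identity (k : ℕ) (hk : 6 ≤ k) (x : ℕ → ℝ)
    (L : ℕ → ℝ) (hL : ∀ i, L i = 1 + x i + x (i + 1)) :
    -x 2 * (1 + x 2) * (∏ i ∈ Icc 4 (k - 1), L i)
      + (x 2 - x 4) * L 1 * (∏ i ∈ Icc 4 (k - 1), L i)
      + x 4 * (1 + x 4) * L 1 * (∏ i ∈ Icc 5 (k - 1), L i)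
      + ∑ m ∈ Icc 5 (k - 1),
          x m * (x m + 1) * (x (m - 1) - x (m + 1)) * L 1 *
            ∏ i ∈ (Icc 4 (k - 1)) \ {m - 1, m}, L i
    = (∏ i ∈ Icc 4 (k - 2), L i) *
        (x 1 * x 2 * L (k - 1) - x (k - 1) * x k * L 1) := by
  induction k, hk using Nat.le_induction with
  | base =>
      have e1 : Icc 4 5 = ({4, 5} : Finset ℕ) := rfl
      have e2 : Icc 5 5 = ({5} : Finset ℕ) := rfl
      have e3 : Icc 4 4 = ({4} : Finset ℕ) := rfl
      norm_num [e1, e2, e3]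
      rw [hL 1, hL 4, hL 5]
      norm_num
      ring
  | succ k hk ih =>
      have h1 : k + 1 - 1 = k := by omega
      have h2 : k + 1 - 2 = k - 1 := by omega
      have h3 : k - 1 + 1 = k := by omega
      rw [h1, h2]
      -- split off top of products and sum
      have hp1 : (∏ i ∈ Icc 4 k, L i) = (∏ i ∈ Icc 4 (k - 1), L i) * L k := by
        rw [← h3, Finset.prod_Icc_succ_top (by omega)]
        rw [Nat.add_sub_cancel]
      have hp2 : (∏ i ∈ Icc 5 k, L i) = (∏ i ∈ Icc 5 (k - 1), L i) * L k := by
        rw [← h3, Finset.prod_Icc_succ_top (by omega)]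
        rw [Nat.add_sub_cancel]
      have hp3 : (∏ i ∈ Icc 4 (k - 1), L i)
          = (∏ i ∈ Icc 4 (k - 2), L i) * L (k - 1) := by
        have : k - 1 = (k - 2) + 1 := by omega
        rw [this, Finset.prod_Icc_succ_top (by omega)]
      have hlast : (Icc 4 k) \ {k - 1, k} = Icc 4 (k - 2) := by
        ext i
        simp only [mem_sdiff, mem_Icc, mem_insert, mem_singleton]
        omega
      have hsum : (∑ m ∈ Icc 5 k,
            x m * (x m + 1) * (x (m - 1) - x (m + 1)) * L 1 *
              ∏ i ∈ (Icc 4 k) \ {m - 1, m}, L i)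
          = (∑ m ∈ Icc 5 (k - 1),
            x m * (x m + 1) * (x (m - 1) - x (m + 1)) * L 1 *
              ∏ i ∈ (Icc 4 (k - 1)) \ {m - 1, m}, L i) * L k
            + x k * (x k + 1) * (x (k - 1) - x (k + 1)) * L 1 *
              ∏ i ∈ Icc 4 (k - 2), L i := by
        rw [← h3, Finset.sum_Icc_succ_top (by omega)]
        rw [h3, hlast, Finset.sum_mul]
        congr 1
        apply Finset.sum_congr rfl
        intro m hm
        simp only [mem_Icc] at hm
        have hset : (Icc 4 k) \ {m - 1, m}
            = insert k ((Icc 4 (k - 1)) \ {m - 1, m}) := by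
          ext i
          simp only [mem_sdiff, mem_Icc, mem_insert, mem_singleton]
          omega
        have hknot : k ∉ (Icc 4 (k - 1)) \ {m - 1, m} := by
          simp only [mem_sdiff, mem_Icc]
          omega
        rw [hset, Finset.prod_insert hknot]
        ring
      rw [hp1, hp2, hsum]
      rw [hp3] at ih ⊢
      have key : x k * (x k + 1) * (x (k - 1) - x (k + 1))
          = x (k - 1) * x k * L k - L (k - 1) * x k * x (k + 1) := by
        rw [hL k, hL (k - 1), h3]; ring
      linear_combination (L k) * ih
        + (L 1 * ∏ i ∈ Icc 4 (k - 2), L i) * key
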